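/- Let (X,ρ) be a metric space and let f, g be unbounded moduli. Then for all A, B ∈ CL(X) and every sequence (A_k) in CL(X), the equalities [WS^f]-lim A_k = A and [WS^g]-lim A_k = B imply A = B. -/

import Mathlib

open Filter Metric Set
open scoped Classical

/-- A modulus: `f : [0,∞) → [0,∞)` with `f x = 0 ↔ x = 0`, subadditive,
increasing, and continuous (all on `[0,∞)`). -/
def IsModulus (f : ℝ → ℝ) : Prop :=
  (∀ x : ℝ, 0 ≤ x → 0 ≤ f x) ∧
  (∀ x : ℝ, 0 ≤ x → (f x = 0 ↔ x = 0)) ∧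
  (∀ x y : ℝ, 0 ≤ x → 0 ≤ y → f (x + y) ≤ f x + f y) ∧
  MonotoneOn f (Set.Ici 0) ∧
  ContinuousOn f (Set.Ici 0)

/-- `f` is unbounded on `[0,∞)`. -/
def IsUnboundedOn (f : ℝ → ℝ) : Prop := ∀ M : ℝ, ∃ x : ℝ, 0 ≤ x ∧ M < f x

/-- The number of elements `k ≤ n` with `k ∈ K`. -/
noncomputable def countLe (K : Set ℕ) (n : ℕ) : ℕ := Nat.card {k : ℕ | k ≤ n ∧ k ∈ K}

/-- `K ⊆ ℕ` has `f`-density `d`: `lim_n f(|{k ≤ n : k ∈ K}|)/f(n) = d`. -/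
def HasFDensity (f : ℝ → ℝ) (K : Set ℕ) (d : ℝ) : Prop :=
  Tendsto (fun n : ℕ => f (countLe K n : ℝ) / f (n : ℝ)) atTop (nhds d)

/-- `K ⊆ ℕ` has natural density `d`: `lim_n |{k ≤ n : k ∈ K}|/n = d`. -/
def HasNatDensity (K : Set ℕ) (d : ℝ) : Prop :=
  Tendsto (fun n : ℕ => (countLe K n : ℝ) / (n : ℝ)) atTop (nhds d)

/-- Wijsman convergence: `d(x, A_k) → d(x, A)` for every `x`. -/
def WijsmanConvTo {X : Type*} [MetricSpace X] (Aseq : ℕ → Set X) (A : Set X) : Prop :=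
  ∀ x : X, Tendsto (fun k : ℕ => infDist x (Aseq k)) atTop (nhds (infDist x A))

/-- Wijsman statistical convergence (with respect to the natural density). -/
def WijsmanStatConvTo {X : Type*} [MetricSpace X] (Aseq : ℕ → Set X) (A : Set X) : Prop :=
  ∀ x : X, ∀ ε : ℝ, 0 < ε →
    HasNatDensity {k : ℕ | ε ≤ |infDist x (Aseq k) - infDist x A|} 0

/-- `f`-Wijsman statistical convergence: `[WS^f]-lim A_k = A`. -/
def FWijsmanStatConvTo (f : ℝ → ℝ) {X : Type*} [MetricSpace X]
    (Aseq : ℕ → Set X) (A : Set X) : Prop :=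
  ∀ x : X, ∀ ε : ℝ, 0 < ε →
    HasFDensity f {k : ℕ | ε ≤ |infDist x (Aseq k) - infDist x A|} 0

/-- Wijsman boundedness: `sup_k d(x, A_k) < ∞` for every `x`. -/
def WijsmanBounded {X : Type*} [MetricSpace X] (Aseq : ℕ → Set X) : Prop :=
  ∀ x : X, ∃ M : ℝ, ∀ k : ℕ, infDist x (Aseq k) ≤ M

/-- Wijsman Cesàro summability to `A`. -/
def WijsmanCesaroTo {X : Type*} [MetricSpace X] (Aseq : ℕ → Set X) (A : Set X) : Prop :=
  ∀ x : X, Tendsto (fun n : ℕ => (∑ k ∈ Finset.range n, infDist x (Aseq k)) / (n : ℝ))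
    atTop (nhds (infDist x A))

/-- Wijsman strong Cesàro summability to `A` with respect to a modulus `f`:
`[Ww^f]-lim A_k = A`. -/
def WijsmanStrongCesaroTo (f : ℝ → ℝ) {X : Type*} [MetricSpace X]
    (Aseq : ℕ → Set X) (A : Set X) : Prop :=
  ∀ x : X, Tendsto
    (fun n : ℕ => (∑ k ∈ Finset.range n, f |infDist x (Aseq k) - infDist x A|) / (n : ℝ))
    atTop (nhds 0)

/-- A slowly varying modulus: `lim_{x→∞} f(ax)/f(x) = 1` for every `a > 0`. -/
def SlowlyVaryingOn (f : ℝ → ℝ) : Prop :=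
  ∀ a : ℝ, 0 < a → Tendsto (fun x : ℝ => f (a * x) / f x) atTop (nhds 1)


lemma countLe_sum_ge (K K' : Set ℕ) (hcov : ∀ k, k ∈ K ∨ k ∈ K') (n : ℕ) :
    n + 1 ≤ countLe K n + countLe K' n := by
  have h1 : {k : ℕ | k ≤ n} ⊆ {k : ℕ | k ≤ n ∧ k ∈ K} ∪ {k : ℕ | k ≤ n ∧ k ∈ K'} := by
    intro k hk
    rcases hcov k with h | h
    · exact Or.inl ⟨hk, h⟩
    · exact Or.inr ⟨hk, h⟩
  have fin1 : {k : ℕ | k ≤ n ∧ k ∈ K}.Finite :=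
    (Set.finite_Iic n).subset (fun k hk => hk.1)
  have fin2 : {k : ℕ | k ≤ n ∧ k ∈ K'}.Finite :=
    (Set.finite_Iic n).subset (fun k hk => hk.1)
  have hIic : {k : ℕ | k ≤ n} = Set.Iic n := rfl
  calc n + 1 = ({k : ℕ | k ≤ n}).ncard := by
        rw [hIic, ← Nat.card_coe_set_eq]; simp [Nat.card_eq_fintype_card]
    _ ≤ ({k : ℕ | k ≤ n ∧ k ∈ K} ∪ {k : ℕ | k ≤ n ∧ k ∈ K'}).ncard :=
        Set.ncard_le_ncard h1 (fin1.union fin2)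
    _ ≤ ({k : ℕ | k ≤ n ∧ k ∈ K}).ncard + ({k : ℕ | k ≤ n ∧ k ∈ K'}).ncard :=
        Set.ncard_union_le _ _
    _ = countLe K n + countLe K' n := by
        rw [countLe, countLe, ← Nat.card_coe_set_eq, ← Nat.card_coe_set_eq]

lemma mod_pos (f : ℝ → ℝ) (hf : IsModulus f) {x : ℝ} (hx : (1:ℝ) ≤ x) : 0 < f x := by
  obtain ⟨hnn, hzero, hsub, hmono, hcont⟩ := hf
  have h1 : 0 < f 1 := by
    rcases lt_or_eq_of_le (hnn 1 (by norm_num)) with h | h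
    · exact h
    · exact absurd ((hzero 1 (by norm_num)).mp h.symm) one_ne_zero
  exact lt_of_lt_of_le h1 (hmono (by norm_num) (le_trans (by norm_num) hx) hx)

/-- If `S = {n | n+1 ≤ 2 * countLe K n}` is infinite, `K` cannot have `f`-density 0. -/
lemma density_half (f : ℝ → ℝ) (hf : IsModulus f) (K : Set ℕ)
    (hS : {n : ℕ | n + 1 ≤ 2 * countLe K n}.Infinite) : ¬ HasFDensity f K 0 := by
  intro hd
  obtain ⟨hnn, hzero, hsub, hmono, hcont⟩ := hf
  have hev : ∀ᶠ n : ℕ in atTop, f (countLe K n : ℝ) / f (n : ℝ) < 1/2 := by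
    have := (hd.eventually (eventually_lt_nhds (show (0:ℝ) < 1/2 by norm_num)))
    exact this
  rw [eventually_atTop] at hev
  obtain ⟨N, hN⟩ := hev
  obtain ⟨n, hnS, hnge⟩ := hS.exists_gt (max N 1)
  have hnN : N ≤ n := le_of_lt (lt_of_le_of_lt (le_max_left _ _) hnge)
  have hn1 : 1 ≤ n := le_of_lt (lt_of_le_of_lt (le_max_right _ _) hnge)
  have hlt := hN n hnN
  set m := countLe K n with hm
  have hmn : (n:ℝ) ≤ 2 * (m:ℝ) := by
    have h0 : n + 1 ≤ 2 * m := hnS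
    have h1 : ((n:ℝ)) + 1 ≤ 2 * (m:ℝ) := by exact_mod_cast h0
    linarith
  have hmnn : (0:ℝ) ≤ (m:ℝ) := Nat.cast_nonneg m
  have hfn_pos : 0 < f (n:ℝ) := mod_pos f ⟨hnn, hzero, hsub, hmono, hcont⟩
    (Nat.one_le_cast.mpr hn1)
  have hfle : f (n:ℝ) ≤ 2 * f (m:ℝ) := by
    have h1 : f (n:ℝ) ≤ f ((m:ℝ) + (m:ℝ)) :=
      hmono (Set.mem_Ici.mpr (Nat.cast_nonneg n)) (Set.mem_Ici.mpr (by positivity))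
        (by linarith)
    have h2 : f ((m:ℝ) + (m:ℝ)) ≤ f (m:ℝ) + f (m:ℝ) := hsub _ _ hmnn hmnn
    linarith
  have : (1:ℝ)/2 ≤ f (m:ℝ) / f (n:ℝ) := by
    rw [le_div_iff₀ hfn_pos]
    linarith
  linarith

lemma two_density_zero_not_cover (f g : ℝ → ℝ) (hf : IsModulus f) (hg : IsModulus g)
    (K K' : Set ℕ) (h1 : HasFDensity f K 0) (h2 : HasFDensity g K' 0) :
    ¬ (∀ k, k ∈ K ∨ k ∈ K') := by
  intro hcov
  have hsum := countLe_sum_ge K K' hcov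
  have hcover : ∀ n : ℕ, n ∈ {n : ℕ | n + 1 ≤ 2 * countLe K n} ∪
      {n : ℕ | n + 1 ≤ 2 * countLe K' n} := by
    intro n
    by_contra h
    simp only [Set.mem_union, Set.mem_setOf_eq, not_or, not_le] at h
    have := hsum n
    omega
  have : {n : ℕ | n + 1 ≤ 2 * countLe K n}.Infinite ∨
      {n : ℕ | n + 1 ≤ 2 * countLe K' n}.Infinite := by
    by_contra h
    push_neg at h
    have : (Set.univ : Set ℕ).Finite := by
      refine Set.Finite.subset (h.1.union h.2) ?_
      intro n _
      exact hcover n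
    exact Set.infinite_univ this
  rcases this with h | h
  · exact density_half f hf K h h1
  · exact density_half g hg K' h h2

/-- `[WS^f]-lim A_k = A` and `[WS^g]-lim A_k = B` imply `A = B`. -/
theorem stmt1 {X : Type*} [MetricSpace X] (f g : ℝ → ℝ)
    (hf : IsModulus f) (hfu : IsUnboundedOn f)
    (hg : IsModulus g) (hgu : IsUnboundedOn g)
    (A B : Set X) (hA : A.Nonempty) (hAcl : IsClosed A)
    (hB : B.Nonempty) (hBcl : IsClosed B)
    (Aseq : ℕ → Set X) (hAseq : ∀ k, (Aseq k).Nonempty ∧ IsClosed (Aseq k))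
    (hfA : FWijsmanStatConvTo f Aseq A) (hgB : FWijsmanStatConvTo g Aseq B) :
    A = B := by
  have key : ∀ x : X, infDist x A = infDist x B := by
    intro x
    by_contra hne
    set ε := |infDist x A - infDist x B| / 2 with hε
    have hεpos : 0 < ε := by
      have : infDist x A - infDist x B ≠ 0 := sub_ne_zero_of_ne hne
      have := abs_pos.mpr this
      positivity
    have hKf := hfA x ε hεpos
    have hKg := hgB x ε hεpos
    refine two_density_zero_not_cover f g hf hg _ _ hKf hKg ?_
    intro k
    by_contra h
    simp only [Set.mem_setOf_eq, not_or, not_le] at h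
    have habs : |infDist x A - infDist x B| ≤
        |infDist x (Aseq k) - infDist x A| + |infDist x (Aseq k) - infDist x B| := by
      have h0 := abs_sub_le (infDist x A) (infDist x (Aseq k)) (infDist x B)
      rw [abs_sub_comm (infDist x A) (infDist x (Aseq k))] at h0
      exact h0
    have h1 := h.1
    have h2 := h.2
    have : |infDist x A - infDist x B| < 2 * ε := by linarith
    rw [hε] at this
    linarith
  ext y
  rw [hAcl.mem_iff_infDist_zero hA, hBcl.mem_iff_infDist_zero hB, key y]
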